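/- Let n ≥ 2 and let A : ℂ^n → ℂ^n be an ℝ-linear bijection. Suppose there exists an ℝ-linear bijection Ã of the real space of skew-Hermitian n×n complex matrices such that S(A x, A y) = Ã(S(x,y)) for all x, y ∈ ℂ^n (i.e. A extends to a Lie algebra automorphism of the graded nilpotent algebra 𝔤₋ = ℂ^n ⊕ {skew-Hermitian matrices} with bracket S). Then A is complex linear or complex anti-linear: either A(i • x) = i • A(x) for all x, or A(i • x) = −i • A(x) for all x. -/

import Mathlib

open Matrix

noncomputable section

/-- The skew-Hermitian matrix `S(x,y)` with entries
`S(x,y)_jk = conj(x_j)·y_k − conj(y_j)·x_k`. -/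
def Smat {n : ℕ} (x y : Fin n → ℂ) : Matrix (Fin n) (Fin n) ℂ :=
  Matrix.of fun j k => star (x j) * y k - star (y j) * x k

/-- The real space of skew-Hermitian `n×n` complex matrices, as a real
submodule of the `n×n` complex matrices. -/
def skewHerm (n : ℕ) : Submodule ℝ (Matrix (Fin n) (Fin n) ℂ) where
  carrier := {A | Aᴴ = -A}
  add_mem' := by
    intro a b ha hb
    simp only [Set.mem_setOf_eq] at *
    rw [Matrix.conjTranspose_add, ha, hb, neg_add]
  zero_mem' := by
    simp only [Set.mem_setOf_eq, Matrix.conjTranspose_zero, neg_zero]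
  smul_mem' := by
    intro c A hA
    simp only [Set.mem_setOf_eq] at *
    rw [Matrix.conjTranspose_smul, star_trivial, hA, smul_neg]

lemma Smat_mem_skewHerm (n : ℕ) (x y : Fin n → ℂ) : Smat x y ∈ skewHerm n := by
  show (Smat x y)ᴴ = -(Smat x y)
  ext j k
  simp only [Smat, Matrix.conjTranspose_apply, Matrix.neg_apply, Matrix.of_apply,
    star_sub, star_mul', star_star]
  ring

lemma starI : star Complex.I = -Complex.I := by
  simp [Complex.star_def, Complex.conj_I]

lemma hstarI2 (z : ℂ) : star (Complex.I * z) = -(Complex.I * star z) := by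
  simp [star_mul', Complex.star_def, Complex.conj_I]

lemma hstarI' (z : ℂ) : star (Complex.I * z) = -(Complex.I * star z) := by
  simp [star_mul', Complex.star_def, Complex.conj_I]

lemma smat_swap {n : ℕ} (x y : Fin n → ℂ) :
    Smat x (Complex.I • y) = Smat y (Complex.I • x) := by
  ext j k
  simp only [Smat, Matrix.of_apply, Pi.smul_apply, smul_eq_mul, hstarI']
  ring

lemma smat_neg {n : ℕ} (v : Fin n → ℂ) :
    Smat (Complex.I • v) (-v) = Smat v (Complex.I • v) := by
  ext j k
  simp only [Smat, Matrix.of_apply, Pi.smul_apply, Pi.neg_apply, smul_eq_mul, hstarI', star_neg]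
  ring

lemma pointwise {n : ℕ} (v u w : Fin n → ℂ) (hv : v ≠ 0)
    (h1 : Smat v w = Smat (Complex.I • v) u)
    (h2 : Smat u w = Smat v (Complex.I • v)) :
    ∃ c : ℂ, u = c • v := by
  have E1 : ∀ j k, star (v j) * w k - star (w j) * v k
      = -(Complex.I * star (v j)) * u k - star (u j) * (Complex.I * v k) := by
    intro j k
    have h := congrFun (congrFun h1 j) k
    simp only [Smat, Matrix.of_apply, Pi.smul_apply, smul_eq_mul, hstarI2] at h
    linear_combination h
  have E2 : ∀ j k, star (u j) * w k - star (w j) * u k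
      = 2 * Complex.I * (star (v j) * v k) := by
    intro j k
    have h := congrFun (congrFun h2 j) k
    simp only [Smat, Matrix.of_apply, Pi.smul_apply, smul_eq_mul, hstarI2] at h
    linear_combination h
  obtain ⟨j₀, hj₀⟩ : ∃ j, v j ≠ 0 := by
    by_contra h
    push_neg at h
    exact hv (funext fun j => h j)
  have hsv : star (v j₀) ≠ 0 := star_ne_zero.mpr hj₀
  set c : ℂ := (star (w j₀) - Complex.I * star (u j₀)) / star (v j₀) with hc
  have hw : ∀ k, w k = c * v k - Complex.I * u k := by
    intro k
    rw [hc, div_mul_eq_mul_div, eq_sub_iff_add_eq, eq_comm, div_eq_iff hsv]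
    linear_combination -(E1 j₀ k)
  have hsw : ∀ j, star (w j) = star c * star (v j) + Complex.I * star (u j) := by
    intro j
    rw [hw j]
    simp only [star_sub, star_mul', starI]
    ring
  have E2' : ∀ j k, (2*Complex.I*star (u j) + star c * star (v j)) * u k
      = c * star (u j) * v k - 2*Complex.I*(star (v j) * v k) := by
    intro j k
    have h := E2 j k
    rw [hw k, hsw j] at h
    linear_combination -h
  by_cases hcase : ∃ j, v j ≠ 0 ∧ 2*Complex.I*star (u j) + star c * star (v j) ≠ 0
  · obtain ⟨j1, hvj1, hγ⟩ := hcase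
    refine ⟨(c * star (u j1) - 2*Complex.I*star (v j1)) / (2*Complex.I*star (u j1) + star c * star (v j1)), funext fun k => ?_⟩
    rw [Pi.smul_apply, smul_eq_mul, div_mul_eq_mul_div, eq_div_iff hγ]
    linear_combination E2' j1 k
  · push_neg at hcase
    refine ⟨-Complex.I * c / 2, funext fun j => ?_⟩
    rw [Pi.smul_apply, smul_eq_mul]
    by_cases hvj : v j = 0
    · have h := E2' j j
      rw [hvj] at h
      simp only [star_zero, mul_zero, zero_mul, sub_zero, add_zero] at h
      have h3 : u j = 0 := by
        rcases mul_eq_zero.mp h with h4 | h4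
        · rcases mul_eq_zero.mp h4 with h5 | h5
          · exact absurd h5 (by simp [Complex.I_ne_zero])
          · simpa using h5
        · exact h4
      rw [h3, hvj, mul_zero]
    · have hγ := hcase j hvj
      have h2 := congrArg star hγ
      simp only [star_add, star_mul', star_star, star_zero, star_ofNat, starI] at h2
      linear_combination (Complex.I/2) * h2 + u j * Complex.I_sq


/-- if an `ℝ`-linear bijection `A` of `ℂ^n` (`n ≥ 2`) extends to a
Lie algebra automorphism of `𝔤₋ = ℂ^n ⊕ {skew-Hermitian matrices}` (with
bracket `S`), then `A` is complex linear or complex anti-linear. -/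
theorem extension_implies_linear_or_antilinear (n : ℕ) (hn : 2 ≤ n)
    (A : (Fin n → ℂ) →ₗ[ℝ] (Fin n → ℂ)) (hA : Function.Bijective A)
    (hext : ∃ At : skewHerm n →ₗ[ℝ] skewHerm n, Function.Bijective At ∧
      ∀ x y : Fin n → ℂ,
        (At ⟨Smat x y, Smat_mem_skewHerm n x y⟩ : Matrix (Fin n) (Fin n) ℂ) =
          Smat (A x) (A y)) :
    (∀ x, A (Complex.I • x) = Complex.I • A x) ∨
    (∀ x, A (Complex.I • x) = (-Complex.I) • A x) := by
  obtain ⟨At, hAtbij, hAt⟩ := hext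
  set e := LinearEquiv.ofBijective A hA with he
  have hAe : ∀ v, A (e.symm v) = v := fun v => e.apply_symm_apply v
  have hsymmA : ∀ x, e.symm (A x) = x := fun x => e.symm_apply_apply x
  set B : (Fin n → ℂ) → (Fin n → ℂ) := fun v => A (Complex.I • e.symm v) with hB
  have hBA : ∀ x, B (A x) = A (Complex.I • x) := by
    intro x
    simp only [hB, hsymmA]
  have hR2 : ∀ X Y, Smat X (B Y) = Smat Y (B X) := by
    intro X Y
    have h1 : Smat (e.symm X) (Complex.I • e.symm Y) = Smat (e.symm Y) (Complex.I • e.symm X) :=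
      smat_swap _ _
    have h2 := hAt (e.symm X) (Complex.I • e.symm Y)
    have h3 := hAt (e.symm Y) (Complex.I • e.symm X)
    rw [hAe] at h2 h3
    calc Smat X (B Y) = _ := h2.symm
    _ = _ := congrArg (fun S : skewHerm n => (At S : Matrix (Fin n) (Fin n) ℂ)) (Subtype.ext h1)
    _ = Smat Y (B X) := h3
  have hBB : ∀ v, B (B v) = -v := by
    intro v
    simp only [hB, hsymmA, smul_smul, Complex.I_mul_I, neg_one_smul, map_neg]
    rw [hAe]
  have hBadd : ∀ a b, B (a + b) = B a + B b := by
    intro a b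
    simp only [hB, map_add, smul_add]
  have hBne : ∀ v, v ≠ 0 → B v ≠ 0 := by
    intro v hv h0
    simp only [hB] at h0
    have h1 : Complex.I • e.symm v = 0 := hA.injective (h0.trans (map_zero A).symm)
    have h2 : e.symm v = 0 := by
      rcases (smul_eq_zero (r := Complex.I) (m := e.symm v)).mp h1 with h | h
      · exact absurd h Complex.I_ne_zero
      · exact h
    apply hv
    rw [← hAe v, h2, map_zero]
  have hpt : ∀ v, v ≠ 0 → ∃ c : ℂ, B v = c • v := by
    intro v hv
    have h1 := hR2 v (Complex.I • v)
    have h2raw := hR2 (Complex.I • v) (B v)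
    rw [hBB] at h2raw
    have h2 : Smat (B v) (B (Complex.I • v)) = Smat v (Complex.I • v) := by
      rw [← h2raw]; exact smat_neg v
    exact pointwise v (B v) (B (Complex.I • v)) hv h1 h2
  have step2 : ∀ (x y : Fin n → ℂ) (cx cy : ℂ), x ≠ 0 → y ≠ 0 → (¬ ∃ t : ℂ, y = t • x) →
      B x = cx • x → B y = cy • y → cx = cy := by
    intro x y cx cy hx hy hdep hbx hby
    have hxy : x + y ≠ 0 := by
      intro h
      exact hdep ⟨-1, by rw [neg_one_smul]; exact eq_neg_of_add_eq_zero_right h⟩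
    obtain ⟨s, hs⟩ := hpt (x + y) hxy
    rw [hBadd, hbx, hby] at hs
    have key : (cx - s) • x = (s - cy) • y := by
      rw [smul_add] at hs
      rw [sub_smul, sub_smul, sub_eq_sub_iff_add_eq_add]
      exact hs.trans (add_comm _ _)
    by_cases hscy : s = cy
    · rw [hscy, sub_self, zero_smul] at key
      rcases smul_eq_zero.mp key with h | h
      · exact sub_eq_zero.mp h
      · exact absurd h hx
    · exfalso
      apply hdep
      refine ⟨(s - cy)⁻¹ * (cx - s), ?_⟩
      rw [mul_smul, key, ← mul_smul, inv_mul_cancel₀ (sub_ne_zero.mpr (Ne.symm (fun h => hscy h.symm))), one_smul]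
  -- basis vectors
  have h0n : 0 < n := by omega
  have h1n : 1 < n := by omega
  set i0 : Fin n := ⟨0, h0n⟩ with hi0
  set i1 : Fin n := ⟨1, h1n⟩ with hi1
  have hi01 : i1 ≠ i0 := by
    simp only [hi0, hi1, ne_eq, Fin.mk.injEq]
    omega
  set E0 : Fin n → ℂ := Pi.single i0 1 with hE0def
  set E1v : Fin n → ℂ := Pi.single i1 1 with hE1def
  have hE0 : E0 ≠ 0 := by
    intro h
    have := congrFun h i0
    simp [hE0def, Pi.single_eq_same] at this
  have hE1 : E1v ≠ 0 := by
    intro h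
    have := congrFun h i1
    simp [hE1def, Pi.single_eq_same] at this
  have hE1E0 : ¬ ∃ t : ℂ, E1v = t • E0 := by
    rintro ⟨t, ht⟩
    have := congrFun ht i1
    simp [hE0def, hE1def, Pi.single_eq_same, Pi.single_eq_of_ne hi01] at this
  obtain ⟨lam, hlam0⟩ := hpt E0 hE0
  have hlam : ∀ v, v ≠ 0 → B v = lam • v := by
    intro v hv
    obtain ⟨cv, hcv⟩ := hpt v hv
    suffices h : cv = lam by rw [hcv, h]
    by_cases hdep : ∃ t : ℂ, v = t • E0
    · obtain ⟨t, ht⟩ := hdep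
      have hE1vdep : ¬ ∃ s : ℂ, E1v = s • v := by
        rintro ⟨s, hs⟩
        rw [ht, smul_smul] at hs
        exact hE1E0 ⟨s * t, hs⟩
      obtain ⟨c1, hc1⟩ := hpt E1v hE1
      have hA1 : cv = c1 := step2 v E1v cv c1 hv hE1 hE1vdep hcv hc1
      have hA2 : lam = c1 := step2 E0 E1v lam c1 hE0 hE1 hE1E0 hlam0 hc1
      rw [hA1, hA2]
    · exact (step2 E0 v lam cv hE0 hv hdep hlam0 hcv).symm
  have hlamne : lam ≠ 0 := by
    intro h
    rw [h, zero_smul] at hlam0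
    exact hBne E0 hE0 hlam0
  have hsq : lam * lam = -1 := by
    have h := hBB E0
    rw [hlam0, hlam (lam • E0) (smul_ne_zero hlamne hE0)] at h
    have h2 := congrFun h i0
    simp only [hE0def, Pi.smul_apply, Pi.neg_apply, Pi.single_eq_same, smul_eq_mul] at h2
    linear_combination h2
  have hlami : lam = Complex.I ∨ lam = -Complex.I := by
    have h : (lam - Complex.I) * (lam + Complex.I) = 0 := by
      linear_combination hsq - Complex.I_sq
    rcases mul_eq_zero.mp h with h | h
    · left; exact sub_eq_zero.mp h
    · right; exact eq_neg_of_add_eq_zero_left h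
  have final : ∀ x, A (Complex.I • x) = lam • A x := by
    intro x
    by_cases hx : x = 0
    · rw [hx, smul_zero, map_zero, smul_zero]
    · have hAx : A x ≠ 0 := fun h => hx (hA.injective (h.trans (map_zero A).symm))
      rw [← hBA x, hlam (A x) hAx]
  rcases hlami with h | h
  · left; intro x; rw [final x, h]
  · right; intro x; rw [final x, h]
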